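/- For every integer a ≥ 3, the number of positive integers not representable by a, a+3, a+4, a+5 equals (a²+7a+20)/10 if a ≡ 0 (mod 5), (a²+7a+12)/10 if a ≡ 1 or 2 (mod 5), (a²+7a+10)/10 if a ≡ 3 (mod 5), and (a²+7a+16)/10 if a ≡ 4 (mod 5). -/

import Mathlib

open Finset

private lemma aux345 (m : ℕ) : ∀ r, 3 ≤ r → r ≤ 5*m →
    ∃ x y z : ℕ, x+y+z ≤ m ∧ 3*x+4*y+5*z = r := by
  induction m with
  | zero => intro r h1 h2; omega
  | succ m ih =>
    intro r h1 h2
    rcases le_or_gt r (5*m) with h|h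
    · obtain ⟨x,y,z,hs,he⟩ := ih r h1 h
      exact ⟨x,y,z, by omega, he⟩
    · rcases le_or_gt r 5 with h5|h5
      · interval_cases r
        · exact ⟨1,0,0, by omega, by omega⟩
        · exact ⟨0,1,0, by omega, by omega⟩
        · exact ⟨0,0,1, by omega, by omega⟩
      · rcases le_or_gt r 7 with h7|h7
        · interval_cases r
          · exact ⟨2,0,0, by omega, by omega⟩
          · exact ⟨1,1,0, by omega, by omega⟩
        · obtain ⟨x,y,z,hs,he⟩ := ih (r-5) (by omega) (by omega)
          exact ⟨x,y,z+1, by omega, by omega⟩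

private lemma rep_iff (a n : ℕ) :
    (∃ w x y z : ℕ, n = a*w + (a+3)*x + (a+4)*y + (a+5)*z) ↔
    ((∃ m, n = a*m) ∨ (∃ m, a*m+3 ≤ n ∧ n ≤ a*m+5*m)) := by
  constructor
  · rintro ⟨w,x,y,z,rfl⟩
    by_cases hxyz : x = 0 ∧ y = 0 ∧ z = 0
    · obtain ⟨rfl,rfl,rfl⟩ := hxyz
      exact Or.inl ⟨w, by ring⟩
    · right
      refine ⟨w+x+y+z, ?_, ?_⟩
      · have h : a*w+(a+3)*x+(a+4)*y+(a+5)*z = a*(w+x+y+z) + (3*x+4*y+5*z) := by ring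
        rw [h]
        have : 3 ≤ 3*x+4*y+5*z := by omega
        linarith
      · have h : a*w+(a+3)*x+(a+4)*y+(a+5)*z = a*(w+x+y+z) + (3*x+4*y+5*z) := by ring
        rw [h]
        have : 3*x+4*y+5*z ≤ 5*(w+x+y+z) := by omega
        linarith
  · rintro (⟨m, rfl⟩ | ⟨m, h1, h2⟩)
    · exact ⟨m,0,0,0, by ring⟩
    · have h3 : a*m ≤ n := le_trans (Nat.le_add_right _ 3) h1
      obtain ⟨r, hr⟩ : ∃ r, n = a*m + r := ⟨n - a*m, (Nat.add_sub_cancel' h3).symm⟩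
      subst hr
      have hr3 : 3 ≤ r := by linarith
      have hr5 : r ≤ 5*m := by linarith
      obtain ⟨x,y,z,hs,he⟩ := aux345 m r hr3 hr5
      refine ⟨m - (x+y+z), x, y, z, ?_⟩
      have hw : (m - (x+y+z)) + (x+y+z) = m := by omega
      have h : a*(m-(x+y+z)) + (a+3)*x + (a+4)*y + (a+5)*z
          = a*((m-(x+y+z)) + (x+y+z)) + (3*x+4*y+5*z) := by ring
      rw [h, hw, he]

private def gapCond (a m j : ℕ) : Prop :=
  (j = 1 ∧ 5*m ≤ a+5) ∨ (j = 2 ∧ 5*m ≤ a+6) ∨ (3 ≤ j ∧ j+1 ≤ a ∧ 5*m < j)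

private lemma gap_iff (a n : ℕ) (ha : 3 ≤ a) (hn : 0 < n) :
    (¬ ∃ w x y z : ℕ, n = a*w + (a+3)*x + (a+4)*y + (a+5)*z) ↔
    ∃ m j, n = a*m + j ∧ gapCond a m j := by
  rw [rep_iff]
  constructor
  · intro h
    have h1 : ∀ m, n ≠ a*m := fun m hm => h (Or.inl ⟨m, hm⟩)
    have h2 : ∀ m, ¬(a*m+3 ≤ n ∧ n ≤ a*m+5*m) := fun m hm => h (Or.inr ⟨m, hm⟩)
    have ha0 : 0 < a := by omega
    obtain ⟨m, j, hdm, hj⟩ : ∃ m j, a*m+j = n ∧ j < a :=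
      ⟨n/a, n%a, Nat.div_add_mod n a, Nat.mod_lt n ha0⟩
    have hj0 : j ≠ 0 := by
      intro h0
      exact h1 m (by omega)
    refine ⟨m, j, hdm.symm, ?_⟩
    rcases (show j = 1 ∨ j = 2 ∨ 3 ≤ j by omega) with rfl | rfl | hj3
    · left
      refine ⟨rfl, ?_⟩
      by_contra hc
      push_neg at hc
      have hm1 : 1 ≤ m := by
        by_contra hm0
        have : m = 0 := by omega
        rw [this] at hc; omega
      obtain ⟨m', rfl⟩ : ∃ m', m = m'+1 := ⟨m-1, by omega⟩
      refine h2 m' ⟨?_, ?_⟩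
      · have hexp : a*(m'+1) = a*m' + a := by ring
        rw [← hdm, hexp]; linarith
      · have hexp : a*(m'+1) = a*m' + a := by ring
        rw [← hdm, hexp]; linarith
    · right; left
      refine ⟨rfl, ?_⟩
      by_contra hc
      push_neg at hc
      have hm1 : 1 ≤ m := by
        by_contra hm0
        have : m = 0 := by omega
        rw [this] at hc; omega
      obtain ⟨m', rfl⟩ : ∃ m', m = m'+1 := ⟨m-1, by omega⟩
      refine h2 m' ⟨?_, ?_⟩
      · have hexp : a*(m'+1) = a*m' + a := by ring
        rw [← hdm, hexp]; linarith
      · have hexp : a*(m'+1) = a*m' + a := by ring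
        rw [← hdm, hexp]; linarith
    · right; right
      refine ⟨hj3, by omega, ?_⟩
      by_contra hc
      push_neg at hc
      refine h2 m ⟨?_, ?_⟩
      · rw [← hdm]; linarith
      · rw [← hdm]; linarith
  · rintro ⟨m, j, rfl, hcond⟩
    have hj1 : 1 ≤ j := by rcases hcond with ⟨rfl,_⟩|⟨rfl,_⟩|⟨h3,_,_⟩ <;> omega
    have hja : j < a := by rcases hcond with ⟨rfl,_⟩|⟨rfl,_⟩|⟨_,h4,_⟩ <;> omega
    rintro (⟨m', hm'⟩ | ⟨m', hm1, hm2⟩)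
    · have e1 : (a*m+j) % a = j % a := Nat.mul_add_mod a m j
      have e2 : (a*m') % a = 0 := Nat.mul_mod_right a m'
      rw [hm'] at e1
      rw [e2] at e1
      rw [Nat.mod_eq_of_lt hja] at e1
      omega
    · -- m' ≤ m
      have hexp : a*(m+1) = a*m + a := by ring
      have hlt : a*m' < a*(m+1) := by rw [hexp]; linarith
      have hm'm : m' ≤ m := by
        have := Nat.lt_of_mul_lt_mul_left hlt
        omega
      rcases hcond with ⟨rfl, hc⟩|⟨rfl, hc⟩|⟨h3, h4, h5⟩
      · rcases eq_or_lt_of_le hm'm with rfl | hlt'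
        · linarith
        · have hmul : a*(m'+1) ≤ a*m := Nat.mul_le_mul_left a (by omega)
          have hexp2 : a*(m'+1) = a*m' + a := by ring
          rw [hexp2] at hmul
          have : 5*m' + 5 ≤ 5*m := by omega
          linarith
      · rcases eq_or_lt_of_le hm'm with rfl | hlt'
        · linarith
        · have hmul : a*(m'+1) ≤ a*m := Nat.mul_le_mul_left a (by omega)
          have hexp2 : a*(m'+1) = a*m' + a := by ring
          rw [hexp2] at hmul
          have : 5*m' + 5 ≤ 5*m := by omega
          linarith
      · have hmul : a*m' ≤ a*m := Nat.mul_le_mul_left a hm'm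
        have : 5*m' ≤ 5*m := by omega
        linarith

private lemma key_inj {a m m' j j' : ℕ} (hj : j < a) (hj' : j' < a)
    (h : a*m+j = a*m'+j') : m = m' ∧ j = j' := by
  have e1 : (a*m+j) % a = j % a := Nat.mul_add_mod a m j
  have e2 : (a*m'+j') % a = j' % a := Nat.mul_add_mod a m' j'
  rw [Nat.mod_eq_of_lt hj] at e1
  rw [Nat.mod_eq_of_lt hj'] at e2
  have hjj : j = j' := by rw [← e1, h, e2]
  subst hjj
  have h2 : a*m = a*m' := by omega
  exact ⟨Nat.eq_of_mul_eq_mul_left (by omega) h2, rfl⟩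

private def T1 (a : ℕ) : Finset ℕ := (range (a/5+2)).image (fun m => a*m+1)
private def T2 (a : ℕ) : Finset ℕ := (range ((a+6)/5+1)).image (fun m => a*m+2)
private def T3 (a : ℕ) : Finset ℕ :=
  (range a).biUnion (fun m => (Ico (max 3 (5*m+1)) a).image (fun j => a*m+j))
private def GF (a : ℕ) : Finset ℕ := T1 a ∪ T2 a ∪ T3 a

private lemma mem_GF (a n : ℕ) (ha : 3 ≤ a) :
    n ∈ GF a ↔ ∃ m j, n = a*m + j ∧ gapCond a m j := by
  simp only [GF, T1, T2, T3, mem_union, mem_image, mem_range, mem_biUnion, mem_Ico,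
    max_le_iff, gapCond]
  constructor
  · rintro ((⟨m, hm, rfl⟩ | ⟨m, hm, rfl⟩) | ⟨m, hm, j, ⟨⟨hj3, hj5⟩, hja⟩, rfl⟩)
    · exact ⟨m, 1, rfl, Or.inl ⟨rfl, by omega⟩⟩
    · exact ⟨m, 2, rfl, Or.inr (Or.inl ⟨rfl, by omega⟩)⟩
    · exact ⟨m, j, rfl, Or.inr (Or.inr ⟨hj3, by omega, by omega⟩)⟩
  · rintro ⟨m, j, rfl, (⟨rfl, hc⟩ | ⟨rfl, hc⟩ | ⟨h3, h4, h5⟩)⟩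
    · exact Or.inl (Or.inl ⟨m, by omega, rfl⟩)
    · exact Or.inl (Or.inr ⟨m, by omega, rfl⟩)
    · exact Or.inr ⟨m, by omega, j, ⟨⟨h3, by omega⟩, by omega⟩, rfl⟩

private lemma card_T1 (a : ℕ) (ha : 3 ≤ a) : (T1 a).card = a/5+2 := by
  rw [T1, Finset.card_image_of_injective _ (fun x y h => (key_inj (show (1:ℕ) < a by omega) (by omega) h).1), Finset.card_range]

private lemma card_T2 (a : ℕ) (ha : 3 ≤ a) : (T2 a).card = (a+6)/5+1 := by
  rw [T2, Finset.card_image_of_injective _ (fun x y h => (key_inj (show (2:ℕ) < a by omega) (by omega) h).1), Finset.card_range]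

private lemma card_T3 (a : ℕ) (ha : 3 ≤ a) :
    (T3 a).card = ∑ m ∈ range a, (a - max 3 (5*m+1)) := by
  rw [T3, Finset.card_biUnion]
  · refine Finset.sum_congr rfl (fun m _ => ?_)
    rw [Finset.card_image_of_injOn, Nat.card_Ico]
    intro x hx y hy h
    simp only [Finset.coe_Ico, Set.mem_Ico, max_le_iff] at hx hy
    exact (key_inj hx.2 hy.2 h).2
  · intro m _ m' _ hmm'
    rw [Function.onFun, Finset.disjoint_left]
    rintro x hx hx'
    simp only [mem_image, mem_Ico, max_le_iff] at hx hx'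
    obtain ⟨j, ⟨_, hja⟩, rfl⟩ := hx
    obtain ⟨j', ⟨_, hja'⟩, he⟩ := hx'
    exact hmm' ((key_inj hja' hja he).1.symm)

private lemma card_GF (a : ℕ) (ha : 3 ≤ a) :
    (GF a).card = (a/5+2) + ((a+6)/5+1) + ∑ m ∈ range a, (a - max 3 (5*m+1)) := by
  have d12 : Disjoint (T1 a) (T2 a) := by
    rw [Finset.disjoint_left]
    rintro x hx hx'
    simp only [T1, T2, mem_image, mem_range] at hx hx'
    obtain ⟨m, _, rfl⟩ := hx
    obtain ⟨m', _, he⟩ := hx'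
    have := (key_inj (show (2:ℕ) < a by omega) (show (1:ℕ) < a by omega) he).2
    omega
  have d123 : Disjoint (T1 a ∪ T2 a) (T3 a) := by
    rw [Finset.disjoint_left]
    rintro x hx hx'
    simp only [T1, T2, mem_union, mem_image, mem_range] at hx
    simp only [T3, mem_biUnion, mem_range, mem_image, mem_Ico, max_le_iff] at hx'
    obtain ⟨m, _, j, ⟨⟨hj3, _⟩, hja⟩, rfl⟩ := hx'
    rcases hx with ⟨m', _, he⟩ | ⟨m', _, he⟩
    · have := (key_inj hja (show (1:ℕ) < a by omega) he.symm).2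
      omega
    · have := (key_inj hja (show (2:ℕ) < a by omega) he.symm).2
      omega
  rw [GF, Finset.card_union_of_disjoint d123, Finset.card_union_of_disjoint d12,
    card_T1 a ha, card_T2 a ha, card_T3 a ha]

private def D (a : ℕ) : ℕ := ∑ m ∈ range a, (a - (5*m+1))

private lemma sum_max (a : ℕ) (ha : 3 ≤ a) :
    (∑ m ∈ range a, (a - max 3 (5*m+1))) + 2 = D a := by
  obtain ⟨b, rfl⟩ : ∃ b, a = b+1 := ⟨a-1, by omega⟩
  rw [D, Finset.sum_range_succ', Finset.sum_range_succ']
  have htail : ∀ i, (b+1) - max 3 (5*(i+1)+1) = (b+1) - (5*(i+1)+1) := fun i => by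
    rw [Nat.max_eq_right (by omega)]
  rw [Finset.sum_congr rfl (fun i _ => htail i)]
  have h3 : max 3 (5*0+1) = 3 := by norm_num
  rw [h3]
  generalize (∑ i ∈ range b, ((b+1) - (5*(i+1)+1))) = S
  omega

private lemma D_succ (a : ℕ) : D (a+1) = D a + (a+4)/5 := by
  rw [D, D, Finset.sum_range_succ]
  have hlast : (a+1) - (5*a+1) = 0 := by omega
  rw [hlast, add_zero]
  have hterm : ∀ m, (a+1) - (5*m+1) = (a - (5*m+1)) + (if 5*m+1 ≤ a then 1 else 0) := by
    intro m; split_ifs with h <;> omega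
  rw [Finset.sum_congr rfl (fun m _ => hterm m), Finset.sum_add_distrib]
  congr 1
  have hfil : (range a).filter (fun m => 5*m+1 ≤ a) = range ((a+4)/5) := by
    ext x
    simp only [mem_filter, mem_range]
    omega
  calc (∑ m ∈ range a, if 5*m+1 ≤ a then 1 else 0)
      = ((range a).filter (fun m => 5*m+1 ≤ a)).card := by
        rw [Finset.card_filter]
    _ = (a+4)/5 := by rw [hfil, Finset.card_range]

private def E : ℕ → ℕ := fun r => if r = 1 then 4 else if r ≤ 2 then 8 else 10

private lemma D_closed (a : ℕ) : 10 * D a + 8 = a^2 + 3*a + E (a % 5) := by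
  induction a with
  | zero => simp [D, E]
  | succ a ih =>
    rw [D_succ]
    have hsq : (a+1)^2 = a^2 + 2*a + 1 := by ring
    rw [hsq]
    rcases (show a % 5 = 0 ∨ a%5=1 ∨ a%5=2 ∨ a%5=3 ∨ a%5=4 by omega) with h|h|h|h|h
    · have h2 : (a+1)%5 = 1 := by omega
      rw [h] at ih; rw [h2]
      simp only [E] at ih ⊢
      norm_num at ih ⊢
      generalize hA : a^2 = A at ih ⊢
      omega
    · have h2 : (a+1)%5 = 2 := by omega
      rw [h] at ih; rw [h2]
      simp only [E] at ih ⊢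
      norm_num at ih ⊢
      generalize hA : a^2 = A at ih ⊢
      omega
    · have h2 : (a+1)%5 = 3 := by omega
      rw [h] at ih; rw [h2]
      simp only [E] at ih ⊢
      norm_num at ih ⊢
      generalize hA : a^2 = A at ih ⊢
      omega
    · have h2 : (a+1)%5 = 4 := by omega
      rw [h] at ih; rw [h2]
      simp only [E] at ih ⊢
      norm_num at ih ⊢
      generalize hA : a^2 = A at ih ⊢
      omega
    · have h2 : (a+1)%5 = 0 := by omega
      rw [h] at ih; rw [h2]
      simp only [E] at ih ⊢
      norm_num at ih ⊢
      generalize hA : a^2 = A at ih ⊢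
      omega

theorem stmt15 (a : ℕ) (ha : 3 ≤ a) :
    (a % 5 = 0 → {n : ℕ | 0 < n ∧
        ¬ ∃ w x y z : ℕ, n = a * w + (a + 3) * x + (a + 4) * y + (a + 5) * z}.ncard
        = (a ^ 2 + 7 * a + 20) / 10) ∧
    (a % 5 = 1 ∨ a % 5 = 2 → {n : ℕ | 0 < n ∧
        ¬ ∃ w x y z : ℕ, n = a * w + (a + 3) * x + (a + 4) * y + (a + 5) * z}.ncard
        = (a ^ 2 + 7 * a + 12) / 10) ∧
    (a % 5 = 3 → {n : ℕ | 0 < n ∧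
        ¬ ∃ w x y z : ℕ, n = a * w + (a + 3) * x + (a + 4) * y + (a + 5) * z}.ncard
        = (a ^ 2 + 7 * a + 10) / 10) ∧
    (a % 5 = 4 → {n : ℕ | 0 < n ∧
        ¬ ∃ w x y z : ℕ, n = a * w + (a + 3) * x + (a + 4) * y + (a + 5) * z}.ncard
        = (a ^ 2 + 7 * a + 16) / 10) := by
  have hset : {n : ℕ | 0 < n ∧
      ¬ ∃ w x y z : ℕ, n = a * w + (a + 3) * x + (a + 4) * y + (a + 5) * z}
      = ↑(GF a) := by
    ext n
    simp only [Set.mem_setOf_eq, Finset.mem_coe, mem_GF a n ha]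
    constructor
    · rintro ⟨hn, hrep⟩
      exact (gap_iff a n ha hn).1 hrep
    · rintro ⟨m, j, rfl, hc⟩
      have hn : 0 < a*m+j := by
        rcases hc with ⟨rfl,_⟩|⟨rfl,_⟩|⟨h3,_,_⟩ <;> omega
      exact ⟨hn, (gap_iff a _ ha hn).2 ⟨m, j, rfl, hc⟩⟩
  have hcard : {n : ℕ | 0 < n ∧
      ¬ ∃ w x y z : ℕ, n = a * w + (a + 3) * x + (a + 4) * y + (a + 5) * z}.ncard
      = (a/5+2) + ((a+6)/5+1) + ∑ m ∈ range a, (a - max 3 (5*m+1)) := by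
    rw [hset, Set.ncard_coe_finset, card_GF a ha]
  have hsum := sum_max a ha
  have hD := D_closed a
  have hsq : a^2 = a*a := sq a
  have hge : 3*a ≤ a*a := Nat.mul_le_mul_right a ha
  rw [hsq] at hD
  refine ⟨fun h0 => ?_, fun h12 => ?_, fun h3 => ?_, fun h4 => ?_⟩
  · rw [hcard, hsq]
    rw [h0] at hD
    norm_num [E] at hD
    generalize hA : a*a = A at hD hge ⊢
    generalize hS : (∑ m ∈ range a, (a - max 3 (5*m+1))) = S at hsum ⊢
    omega
  · rcases h12 with h | h <;>
      (rw [hcard, hsq]; rw [h] at hD; norm_num [E] at hD;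
       generalize hA : a*a = A at hD hge ⊢;
       generalize hS : (∑ m ∈ range a, (a - max 3 (5*m+1))) = S at hsum ⊢;
       omega)
  · rw [hcard, hsq]
    rw [h3] at hD
    norm_num [E] at hD
    generalize hA : a*a = A at hD hge ⊢
    generalize hS : (∑ m ∈ range a, (a - max 3 (5*m+1))) = S at hsum ⊢
    omega
  · rw [hcard, hsq]
    rw [h4] at hD
    norm_num [E] at hD
    generalize hA : a*a = A at hD hge ⊢
    generalize hS : (∑ m ∈ range a, (a - max 3 (5*m+1))) = S at hsum ⊢
    omega
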